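/- Let m ≥ n, let A ∈ ℝ^{m×n} have full column rank n, let W ∈ ℝ^{n×n} be symmetric positive definite, and let S ∈ ℝ^{m×n} have full column rank n with every column of S in the column space of A. Then the n×n matrix Sᵀ A is invertible, the n×n matrix Sᵀ A W Aᵀ S is invertible, and for every w ∈ ℝ^n, W Aᵀ S (Sᵀ A W Aᵀ S)⁻¹ Sᵀ (A w) = (Sᵀ A)⁻¹ Sᵀ (A w) = w. In particular, for any x ∈ ℝ^n and b = A w, one step of the update x ↦ x + W Aᵀ S (Sᵀ A W Aᵀ S)⁻¹ Sᵀ (b − A x) produces w exactly. -/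
import Mathlib

open Matrix

/-- For `m ≥ n`, `A` of full column rank, `W` symmetric positive definite, and a
full-column-rank sketch `S` whose columns lie in the range of `A`, the matrices
`Sᵀ A` and `Sᵀ A W Aᵀ S` are invertible and one projection step recovers the
exact solution. -/
theorem stmt1 (m n : ℕ) (hmn : n ≤ m)
    (A : Matrix (Fin m) (Fin n) ℝ)
    (hA : LinearIndependent ℝ (fun j i => A i j))
    (W : Matrix (Fin n) (Fin n) ℝ) (hW : W.PosDef)
    (S : Matrix (Fin m) (Fin n) ℝ)
    (hS : LinearIndependent ℝ (fun j i => S i j))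
    (hrange : ∀ j : Fin n, ∃ u : Fin n → ℝ, A.mulVec u = fun i => S i j) :
    IsUnit (Sᵀ * A) ∧
    IsUnit (Sᵀ * A * W * Aᵀ * S) ∧
    (∀ w : Fin n → ℝ,
      (W * Aᵀ * S).mulVec ((Sᵀ * A * W * Aᵀ * S)⁻¹.mulVec (Sᵀ.mulVec (A.mulVec w))) = w ∧
      (Sᵀ * A)⁻¹.mulVec (Sᵀ.mulVec (A.mulVec w)) = w) ∧
    (∀ w x : Fin n → ℝ,
      x + (W * Aᵀ * S).mulVec
        ((Sᵀ * A * W * Aᵀ * S)⁻¹.mulVec (Sᵀ.mulVec (A.mulVec w - A.mulVec x))) = w) := by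
  -- A has injective mulVec
  have hAinj : Function.Injective A.mulVec := by
    rw [Matrix.mulVec_injective_iff]
    exact hA
  have hSinj : Function.Injective S.mulVec := by
    rw [Matrix.mulVec_injective_iff]
    exact hS
  -- AᵀA is a unit
  have hAtA : IsUnit (Aᵀ * A) := by
    rw [← Matrix.mulVec_injective_iff_isUnit]
    intro v v' h
    apply hAinj
    have hker := Matrix.ker_mulVecLin_transpose_mul_self A
    have : (Aᵀ * A).mulVec (v - v') = 0 := by
      rw [Matrix.mulVec_sub, h, sub_self]
    have hv : (v - v') ∈ LinearMap.ker (Aᵀ * A).mulVecLin := this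
    rw [hker, LinearMap.mem_ker, Matrix.mulVecLin_apply] at hv
    have := Matrix.mulVec_sub A v v'
    rw [hv] at this
    linear_combination (norm := module) -this
  -- extract U with A * U = S
  obtain ⟨U, hU⟩ : ∃ U : Matrix (Fin n) (Fin n) ℝ, A * U = S := by
    refine ⟨Matrix.of fun i j => (hrange j).choose i, ?_⟩
    ext i j
    have := congr_fun (hrange j).choose_spec i
    simpa [Matrix.mul_apply, Matrix.mulVec, dotProduct] using this
  -- U is a unit
  have hUu : IsUnit U := by
    rw [← Matrix.mulVec_injective_iff_isUnit]
    intro v v' h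
    apply hSinj
    rw [← hU, ← Matrix.mulVec_mulVec, ← Matrix.mulVec_mulVec, h]
  -- Sᵀ * A = Uᵀ * (Aᵀ * A)
  have hSA : Sᵀ * A = Uᵀ * (Aᵀ * A) := by
    rw [← hU, Matrix.transpose_mul, Matrix.mul_assoc]
  have hM : IsUnit (Sᵀ * A) := by
    rw [hSA]
    exact ((Matrix.isUnit_transpose U).mpr hUu).mul hAtA
  set M := Sᵀ * A with hMdef
  have hAS : Aᵀ * S = Mᵀ := by
    rw [hMdef, Matrix.transpose_mul, Matrix.transpose_transpose]
  have hNeq : Sᵀ * A * W * Aᵀ * S = M * W * Mᵀ := by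
    rw [Matrix.mul_assoc (Sᵀ * A * W), hAS]
  have hN : IsUnit (Sᵀ * A * W * Aᵀ * S) := by
    rw [hNeq]
    exact (hM.mul hW.isUnit).mul ((Matrix.isUnit_transpose M).mpr hM)
  refine ⟨hM, hN, ?_, ?_⟩
  · -- key matrix identity
    have hMdet : IsUnit M.det := (Matrix.isUnit_iff_isUnit_det M).mp hM
    have hWdet : IsUnit W.det := (Matrix.isUnit_iff_isUnit_det W).mp hW.isUnit
    have hMtdet : IsUnit Mᵀ.det := by rwa [Matrix.det_transpose]
    have key : (W * Aᵀ * S) * (Sᵀ * A * W * Aᵀ * S)⁻¹ * (Sᵀ * A) = 1 := by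
      rw [hNeq, Matrix.mul_assoc W, hAS, ← hMdef]
      rw [Matrix.mul_inv_rev, Matrix.mul_inv_rev]
      calc W * Mᵀ * (Mᵀ⁻¹ * (W⁻¹ * M⁻¹)) * M
          = W * (Mᵀ * Mᵀ⁻¹) * W⁻¹ * (M⁻¹ * M) := by
            simp only [Matrix.mul_assoc]
        _ = 1 := by
            rw [Matrix.mul_nonsing_inv _ hMtdet, Matrix.nonsing_inv_mul _ hMdet,
              Matrix.mul_one, Matrix.mul_one, Matrix.mul_nonsing_inv _ hWdet]
    intro w
    constructor
    · rw [Matrix.mulVec_mulVec, Matrix.mulVec_mulVec, Matrix.mulVec_mulVec]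
      have : W * Aᵀ * S * (Sᵀ * A * W * Aᵀ * S)⁻¹ * Sᵀ * A = 1 := by
        rw [Matrix.mul_assoc _ Sᵀ A]; exact key
      rw [this, Matrix.one_mulVec]
    · rw [Matrix.mulVec_mulVec, Matrix.mulVec_mulVec]
      have : M⁻¹ * Sᵀ * A = 1 := by
        rw [Matrix.mul_assoc, ← hMdef, Matrix.nonsing_inv_mul _ hMdet]
      rw [this, Matrix.one_mulVec]
  · intro w x
    have hMdet : IsUnit M.det := (Matrix.isUnit_iff_isUnit_det M).mp hM
    have hWdet : IsUnit W.det := (Matrix.isUnit_iff_isUnit_det W).mp hW.isUnit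
    have hMtdet : IsUnit Mᵀ.det := by rwa [Matrix.det_transpose]
    have key : (W * Aᵀ * S) * (Sᵀ * A * W * Aᵀ * S)⁻¹ * (Sᵀ * A) = 1 := by
      rw [hNeq, Matrix.mul_assoc W, hAS, ← hMdef]
      rw [Matrix.mul_inv_rev, Matrix.mul_inv_rev]
      calc W * Mᵀ * (Mᵀ⁻¹ * (W⁻¹ * M⁻¹)) * M
          = W * (Mᵀ * Mᵀ⁻¹) * W⁻¹ * (M⁻¹ * M) := by
            simp only [Matrix.mul_assoc]
        _ = 1 := by
            rw [Matrix.mul_nonsing_inv _ hMtdet, Matrix.nonsing_inv_mul _ hMdet,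
              Matrix.mul_one, Matrix.mul_one, Matrix.mul_nonsing_inv _ hWdet]
    have hsub : A.mulVec w - A.mulVec x = A.mulVec (w - x) := (Matrix.mulVec_sub A w x).symm
    rw [hsub, Matrix.mulVec_mulVec, Matrix.mulVec_mulVec, Matrix.mulVec_mulVec]
    have h1 : W * Aᵀ * S * (Sᵀ * A * W * Aᵀ * S)⁻¹ * Sᵀ * A = 1 := by
      rw [Matrix.mul_assoc _ Sᵀ A]; exact key
    rw [h1, Matrix.one_mulVec]
    abel
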